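/- arXiv:2002.07562 — 4 statements merged into one kernel-verified Lean document; each statement's English description precedes it below -/
import Mathlib

section
/- For every regular expression r, every symbol a ∈ Σ, and every word w ∈ Σ*, the word a·w belongs to L(r) if and only if there exists a regular expression r' such that r —a→ r' and w ∈ L(r'). -/
open RegularExpression

/-- The acceptance predicate √ on regular expressions. -/
inductive Surd {α : Type} : RegularExpression α → Prop
  | eps : Surd 1
  | star (r : RegularExpression α) : Surd (RegularExpression.star r)
  | plusL {r₁ r₂ : RegularExpression α} : Surd r₁ → Surd (r₁ + r₂)
  | plusR {r₁ r₂ : RegularExpression α} : Surd r₂ → Surd (r₁ + r₂)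
  | comp {r₁ r₂ : RegularExpression α} : Surd r₁ → Surd r₂ → Surd (r₁ * r₂)

/-- The SOS transition relation r —a→ r'. -/
inductive Deriv {α : Type} : RegularExpression α → α → RegularExpression α → Prop
  | char (a : α) : Deriv (RegularExpression.char a) a 1
  | plusL {r₁ r₂ r₁' : RegularExpression α} {a : α} :
      Deriv r₁ a r₁' → Deriv (r₁ + r₂) a r₁'
  | plusR {r₁ r₂ r₂' : RegularExpression α} {a : α} :
      Deriv r₂ a r₂' → Deriv (r₁ + r₂) a r₂'
  | compL {r₁ r₂ r₁' : RegularExpression α} {a : α} :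
      Deriv r₁ a r₁' → Deriv (r₁ * r₂) a (r₁' * r₂)
  | compR {r₁ r₂ r₂' : RegularExpression α} {a : α} :
      Surd r₁ → Deriv r₂ a r₂' → Deriv (r₁ * r₂) a r₂'
  | star {r r'' : RegularExpression α} {a : α} :
      Deriv r a r'' → Deriv (RegularExpression.star r) a (r'' * RegularExpression.star r)

/-- Multi-step transitions labelled by a word. -/
inductive Derivs {α : Type} : RegularExpression α → List α → RegularExpression α → Prop
  | nil (r : RegularExpression α) : Derivs r [] r
  | cons {r r' r'' : RegularExpression α} {a : α} {w : List α} :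
      Deriv r a r' → Derivs r' w r'' → Derivs r (a :: w) r''

/-- The reachability set RS(r). -/
def RS {α : Type} (r : RegularExpression α) : Set (RegularExpression α) :=
  {r' | Relation.ReflTransGen (fun s t => ∃ a, Deriv s a t) r r'}

/-- Syntactic size of a regular expression. -/
def rsize {α : Type} : RegularExpression α → ℕ
  | RegularExpression.zero => 1
  | RegularExpression.epsilon => 1
  | RegularExpression.char _ => 1
  | RegularExpression.plus r₁ r₂ => rsize r₁ + rsize r₂ + 1
  | RegularExpression.comp r₁ r₂ => rsize r₁ + rsize r₂ + 1
  | RegularExpression.star r => rsize r + 1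



lemma surd_of_nil {α : Type} : ∀ r : RegularExpression α, [] ∈ r.matches' → Surd r := by
  intro r h
  induction r with
  | zero => simp [matches'] at h
  | epsilon => exact Surd.eps
  | char b => simp only [matches'_char] at h; exact absurd (show ([] : List α) = [b] from h) (by simp)
  | plus r₁ r₂ ih₁ ih₂ =>
    rcases h with h | h
    · exact Surd.plusL (ih₁ h)
    · exact Surd.plusR (ih₂ h)
  | comp r₁ r₂ ih₁ ih₂ =>
    have h' : [] ∈ r₁.matches' * r₂.matches' := h
    rw [Language.mem_mul] at h'
    obtain ⟨x, hx, y, hy, hxy⟩ := h'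
    rcases List.append_eq_nil_iff.mp hxy with ⟨rfl, rfl⟩
    exact Surd.comp (ih₁ hx) (ih₂ hy)
  | star r ih => exact Surd.star r

lemma nil_of_surd {α : Type} {r : RegularExpression α} (h : Surd r) : [] ∈ r.matches' := by
  induction h with
  | eps => exact rfl
  | star r => exact Language.nil_mem_kstar _
  | plusL _ ih => exact Or.inl ih
  | plusR _ ih => exact Or.inr ih
  | comp _ _ ih₁ ih₂ =>
    rw [matches'_mul, Language.mem_mul]
    exact ⟨[], ih₁, [], ih₂, rfl⟩

lemma deriv_sound {α : Type} {r r' : RegularExpression α} {b : α} (h : Deriv r b r') :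
    ∀ w, w ∈ r'.matches' → (b :: w) ∈ r.matches' := by
  induction h with
  | char c =>
    intro w hw
    have : w ∈ (1 : Language α) := hw
    rw [Language.mem_one] at this; subst this; rfl
  | plusL _ ih => intro w hw; exact Or.inl (ih w hw)
  | plusR _ ih => intro w hw; exact Or.inr (ih w hw)
  | @compL r₁ r₂ r₁' c _ ih =>
    intro w hw
    have hw' : w ∈ r₁'.matches' * r₂.matches' := hw
    rw [Language.mem_mul] at hw'
    obtain ⟨x, hx, y, hy, rfl⟩ := hw'
    show c :: (x ++ y) ∈ r₁.matches' * r₂.matches'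
    rw [Language.mem_mul]
    exact ⟨c :: x, ih x hx, y, hy, rfl⟩
  | @compR r₁ r₂ r₂' c hs _ ih =>
    intro w hw
    show c :: w ∈ r₁.matches' * r₂.matches'
    rw [Language.mem_mul]
    exact ⟨[], nil_of_surd hs, c :: w, ih w hw, rfl⟩
  | @star r₀ r'' c _ ih =>
    intro w hw
    have hw' : w ∈ r''.matches' * (RegularExpression.star r₀).matches' := hw
    rw [Language.mem_mul] at hw'
    obtain ⟨x, hx, y, hy, rfl⟩ := hw'
    rw [matches'_star] at hy
    show c :: (x ++ y) ∈ KStar.kstar r₀.matches'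
    rw [Language.mem_kstar] at hy
    obtain ⟨L, rfl, hL⟩ := hy
    rw [show c :: (x ++ L.flatten) = ((c :: x) :: L).flatten from rfl]
    exact Language.join_mem_kstar fun z hz => by
      rcases List.mem_cons.mp hz with rfl | hz
      · exact ih x hx
      · exact hL z hz

theorem cons_mem_iff_deriv {α : Type} (r : RegularExpression α) (a : α) (w : List α) :
    (a :: w) ∈ r.matches' ↔ ∃ r', Deriv r a r' ∧ w ∈ r'.matches' := by
  constructor
  · intro h
    induction r generalizing w with
    | zero => simp [matches'] at h
    | epsilon =>
      have : a :: w ∈ (1 : Language α) := h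
      rw [Language.mem_one] at this; exact absurd this (by simp)
    | char b =>
      rw [matches'_char] at h; replace h : a :: w = [b] := h
      obtain ⟨rfl, rfl⟩ : a = b ∧ w = [] := by
        injection h with h1 h2; exact ⟨h1, h2⟩
      exact ⟨1, Deriv.char a, rfl⟩
    | plus r₁ r₂ ih₁ ih₂ =>
      rcases h with h | h
      · obtain ⟨r', hd, hw⟩ := ih₁ w h
        exact ⟨r', Deriv.plusL hd, hw⟩
      · obtain ⟨r', hd, hw⟩ := ih₂ w h
        exact ⟨r', Deriv.plusR hd, hw⟩
    | comp r₁ r₂ ih₁ ih₂ =>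
      have h' : a :: w ∈ r₁.matches' * r₂.matches' := h
      rw [Language.mem_mul] at h'
      obtain ⟨x, hx, y, hy, hxy⟩ := h'
      cases x with
      | nil =>
        simp only [List.nil_append] at hxy
        subst hxy
        obtain ⟨r', hd, hw⟩ := ih₂ w hy
        exact ⟨r', Deriv.compR (surd_of_nil r₁ hx) hd, hw⟩
      | cons b x =>
        obtain ⟨rfl, rfl⟩ : b = a ∧ w = x ++ y := by
          injection hxy with h1 h2; exact ⟨h1, h2.symm⟩
        obtain ⟨r', hd, hw⟩ := ih₁ x hx
        refine ⟨r' * r₂, Deriv.compL hd, ?_⟩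
        rw [matches'_mul, Language.mem_mul]
        exact ⟨x, hw, y, hy, rfl⟩
    | star r ih =>
      have h' : a :: w ∈ KStar.kstar r.matches' := h
      rw [Language.mem_kstar_iff_exists_nonempty] at h'
      obtain ⟨S, hflat, hS⟩ := h'
      cases S with
      | nil => simp at hflat
      | cons y S' =>
        rw [List.flatten_cons] at hflat
        cases y with
        | nil => exact absurd rfl (hS [] (by simp)).2
        | cons b x =>
          obtain ⟨rfl, rfl⟩ : b = a ∧ w = x ++ S'.flatten := by
            injection hflat with h1 h2; exact ⟨h1.symm, h2⟩
          obtain ⟨r', hd, hw⟩ := ih x (hS _ (by simp)).1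
          refine ⟨r' * RegularExpression.star r, Deriv.star hd, ?_⟩
          rw [matches'_mul, Language.mem_mul]
          refine ⟨x, hw, S'.flatten, ?_, rfl⟩
          rw [matches'_star]
          exact Language.join_mem_kstar fun y hy => (hS y (List.mem_cons_of_mem _ hy)).1
  · rintro ⟨r', hd, hw⟩
    exact deriv_sound hd w hw
end

section
/- For every regular expression r, the set RS(r) of regular expressions reachable from r via the SOS transition relation is finite, and in fact |RS(r)| ≤ |r| + 1, where |r| is the size (number of syntactic constructors) of r. -/
open RegularExpression

/-- Strictly-reachable closure set. -/
def DS {α : Type} : RegularExpression α → Set (RegularExpression α)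
  | RegularExpression.zero => ∅
  | RegularExpression.epsilon => ∅
  | RegularExpression.char _ => {1}
  | RegularExpression.plus r₁ r₂ => DS r₁ ∪ DS r₂
  | RegularExpression.comp r₁ r₂ => (fun s => s * r₂) '' DS r₁ ∪ DS r₂
  | RegularExpression.star r => (fun s => s * RegularExpression.star r) '' DS r

lemma DS_finite {α : Type} (r : RegularExpression α) : (DS r).Finite := by
  induction r with
  | zero => exact Set.finite_empty
  | epsilon => exact Set.finite_empty
  | char a => exact Set.finite_singleton _
  | plus r₁ r₂ ih₁ ih₂ => exact ih₁.union ih₂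
  | comp r₁ r₂ ih₁ ih₂ => exact (ih₁.image _).union ih₂
  | star r ih => exact ih.image _

lemma DS_card {α : Type} (r : RegularExpression α) : (DS r).ncard ≤ rsize r := by
  induction r with
  | zero => simp [DS, rsize]
  | epsilon => simp [DS, rsize]
  | char a => simp [DS, rsize]
  | plus r₁ r₂ ih₁ ih₂ =>
      calc (DS (r₁ + r₂)).ncard ≤ (DS r₁).ncard + (DS r₂).ncard :=
            Set.ncard_union_le _ _
        _ ≤ rsize (r₁ + r₂) := by simp [rsize]; omega
  | comp r₁ r₂ ih₁ ih₂ =>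
      calc (DS (r₁ * r₂)).ncard
          ≤ ((fun s => s * r₂) '' DS r₁).ncard + (DS r₂).ncard :=
            Set.ncard_union_le _ _
        _ ≤ (DS r₁).ncard + (DS r₂).ncard := by
            exact Nat.add_le_add_right (Set.ncard_image_le (DS_finite r₁)) _
        _ ≤ rsize (r₁ * r₂) := by simp [rsize]; omega
  | star r ih =>
      calc (DS (RegularExpression.star r)).ncard ≤ (DS r).ncard :=
            Set.ncard_image_le (DS_finite r)
        _ ≤ rsize (RegularExpression.star r) := by simp [rsize]; omega

lemma deriv_mem_DS {α : Type} {r r' : RegularExpression α} {a : α}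
    (h : Deriv r a r') : r' ∈ DS r := by
  induction h with
  | char a => simp [DS]
  | plusL _ ih => exact Or.inl ih
  | plusR _ ih => exact Or.inr ih
  | compL _ ih => exact Or.inl ⟨_, ih, rfl⟩
  | compR _ _ ih => exact Or.inr ih
  | star _ ih => exact ⟨_, ih, rfl⟩

lemma DS_closed {α : Type} (r : RegularExpression α) :
    ∀ {r' r'' : RegularExpression α} {a : α},
      r' ∈ DS r → Deriv r' a r'' → r'' ∈ DS r := by
  induction r with
  | zero => intro r' r'' a h; exact absurd h (Set.notMem_empty _)
  | epsilon => intro r' r'' a h; exact absurd h (Set.notMem_empty _)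
  | char b =>
      intro r' r'' a h hd
      simp only [DS, Set.mem_singleton_iff] at h
      subst h; cases hd
  | plus r₁ r₂ ih₁ ih₂ =>
      intro r' r'' a h hd
      rcases h with h | h
      · exact Or.inl (ih₁ h hd)
      · exact Or.inr (ih₂ h hd)
  | comp r₁ r₂ ih₁ ih₂ =>
      intro r' r'' a h hd
      rcases h with ⟨s, hs, rfl⟩ | h
      · cases hd with
        | compL hd' => exact Or.inl ⟨_, ih₁ hs hd', rfl⟩
        | compR _ hd' => exact Or.inr (deriv_mem_DS hd')
      · exact Or.inr (ih₂ h hd)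
  | star r ih =>
      intro r' r'' a h hd
      rcases h with ⟨s, hs, rfl⟩
      cases hd with
      | compL hd' => exact ⟨_, ih hs hd', rfl⟩
      | compR _ hd' =>
          cases hd' with
          | star hd'' => exact ⟨_, deriv_mem_DS hd'', rfl⟩

lemma RS_subset {α : Type} (r : RegularExpression α) :
    RS r ⊆ insert r (DS r) := by
  intro r' h
  induction h with
  | refl => exact Set.mem_insert _ _
  | tail _ hbc ih =>
      rcases hbc with ⟨a, hd⟩
      rcases ih with rfl | hb
      · exact Set.mem_insert_of_mem _ (deriv_mem_DS hd)
      · exact Set.mem_insert_of_mem _ (DS_closed _ hb hd)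

theorem RS_finite_card_le {α : Type} (r : RegularExpression α) :
    (RS r).Finite ∧ (RS r).ncard ≤ rsize r + 1 := by
  have hfin : (insert r (DS r)).Finite := (DS_finite r).insert r
  refine ⟨hfin.subset (RS_subset r), ?_⟩
  calc (RS r).ncard ≤ (insert r (DS r)).ncard :=
        Set.ncard_le_ncard (RS_subset r) hfin
    _ ≤ (DS r).ncard + 1 := Set.ncard_insert_le _ _
    _ ≤ rsize r + 1 := Nat.add_le_add_right (DS_card r) _
end

section
/- For regular expressions r₁, r₂, the reachability set of r₁·r₂ satisfies RS(r₁·r₂) ⊆ { r₁'·r₂ : r₁' ∈ RS(r₁) } ∪ RS(r₂). -/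
open RegularExpression

theorem RS_comp_subset {α : Type} (r₁ r₂ : RegularExpression α) :
    RS (r₁ * r₂) ⊆ {s | ∃ r₁' ∈ RS r₁, s = r₁' * r₂} ∪ RS r₂ := by
  intro r' hr'
  induction hr' with
  | refl => exact Or.inl ⟨r₁, Relation.ReflTransGen.refl, rfl⟩
  | tail hst hd ih =>
    obtain ⟨a, hd⟩ := hd
    rcases ih with ⟨r₁', hr₁', rfl⟩ | hmem
    · cases hd with
      | compL h => exact Or.inl ⟨_, hr₁'.tail ⟨_, h⟩, rfl⟩
      | compR hs h => exact Or.inr (Relation.ReflTransGen.single ⟨_, h⟩)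
    · exact Or.inr (hmem.tail ⟨_, hd⟩)
end

section
/- For a regular expression r', the reachability set of (r')* satisfies RS((r')*) ⊆ { (r')* } ∪ { r''·(r')* : r'' ∈ RS(r') }. -/
open RegularExpression

theorem RS_star_subset {α : Type} (r' : RegularExpression α) :
    RS (RegularExpression.star r') ⊆
      insert (RegularExpression.star r')
        {s | ∃ r'' ∈ RS r', s = r'' * RegularExpression.star r'} := by
  intro s hs
  induction hs with
  | refl => exact Set.mem_insert _ _
  | tail _ hstep ih =>
    rename_i b c _
    obtain ⟨a, hd⟩ := hstep
    rcases ih with h | ⟨r'', hr'', rfl⟩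
    · subst h
      cases hd with
      | star h =>
        exact Or.inr ⟨_, Relation.ReflTransGen.single ⟨a, h⟩, rfl⟩
    · cases hd with
      | compL h =>
        exact Or.inr ⟨_, hr''.tail ⟨a, h⟩, rfl⟩
      | compR hs h =>
        cases h with
        | star h =>
          exact Or.inr ⟨_, Relation.ReflTransGen.single ⟨a, h⟩, rfl⟩
end
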